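/- Let S be a finite nonempty set and A a finite set, let L ≥ 1 be an integer, and let q, u : S×A → ℝ satisfy 0 ≤ q(s,a) ≤ u(s,a) and u(s) := Σ_{a∈A} u(s,a) > 0 for every s. Let I : S×A → {0,1} satisfy Σ_{(s,a)∈S×A} I(s,a) ≤ L, let ℓ : S×A → [0,1], let b : S → ℝ satisfy 0 ≤ b(s) ≤ 4L/u(s), and let γ : S×A → ℝ satisfy γ(s,a) ≥ 256·L²·|S| for all (s,a). Then Σ_{(s,a)∈S×A} (I(s,a)·ℓ(s,a)/u(s,a) − b(s))² · q(s,a)²/γ(s,a) ≤ 1/8. -/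

import Mathlib

/-- **Multiplicative-stability verification inequality (Lemma D.7).**
Let `S` be a finite nonempty set, `A` a finite set, `L ≥ 1` an integer, and
`0 ≤ q(s,a) ≤ u(s,a)` with `u(s) = Σ_a u(s,a) > 0`.  Let `I : S×A → {0,1}`
with `Σ I ≤ L`, `ℓ : S×A → [0,1]`, `0 ≤ b(s) ≤ 4L/u(s)`, and
`γ(s,a) ≥ 256·L²·|S|`.  Then
`Σ_{s,a} (I(s,a)·ℓ(s,a)/u(s,a) − b(s))² · q(s,a)² / γ(s,a) ≤ 1/8`. -/
theorem multiplicative_stability_verification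
    (S A : Type) [Fintype S] [Nonempty S] [Fintype A]
    (L : ℕ) (hL : 1 ≤ L)
    (q u : S → A → ℝ)
    (hqu : ∀ s a, 0 ≤ q s a ∧ q s a ≤ u s a)
    (husum : ∀ s : S, 0 < ∑ a, u s a)
    (I : S → A → ℝ) (hI : ∀ s a, I s a = 0 ∨ I s a = 1)
    (hIsum : ∑ s, ∑ a, I s a ≤ (L : ℝ))
    (ℓ : S → A → ℝ) (hℓ : ∀ s a, ℓ s a ∈ Set.Icc (0 : ℝ) 1)
    (b : S → ℝ) (hb : ∀ s, 0 ≤ b s ∧ b s ≤ 4 * (L : ℝ) / ∑ a, u s a)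
    (γ : S → A → ℝ) (hγ : ∀ s a, 256 * (L : ℝ) ^ 2 * (Fintype.card S : ℝ) ≤ γ s a) :
    ∑ s, ∑ a, (I s a * ℓ s a / u s a - b s) ^ 2 * (q s a) ^ 2 / γ s a ≤ 1 / 8 := by
  have hS : 1 ≤ (Fintype.card S : ℝ) := by
    exact_mod_cast Nat.one_le_iff_ne_zero.mpr Fintype.card_ne_zero
  have hL1 : 1 ≤ (L : ℝ) := by exact_mod_cast hL
  set G : ℝ := 256 * (L : ℝ) ^ 2 * (Fintype.card S : ℝ) with hGdef
  have hG : 0 < G := by nlinarith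
  -- per-term bound
  have key : ∀ s a, (I s a * ℓ s a / u s a - b s) ^ 2 * (q s a) ^ 2 / γ s a
      ≤ (I s a + (b s * u s a) ^ 2) / G := by
    intro s a
    obtain ⟨hq0, hqu'⟩ := hqu s a
    obtain ⟨hb0, _⟩ := hb s
    have hI0 : 0 ≤ I s a := by rcases hI s a with h | h <;> simp [h]
    have hII : I s a ^ 2 = I s a := by rcases hI s a with h | h <;> simp [h]
    obtain ⟨hℓ0, hℓ1⟩ := hℓ s a
    have hnum : (I s a * ℓ s a / u s a - b s) ^ 2 * (q s a) ^ 2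
        ≤ I s a + (b s * u s a) ^ 2 := by
      rcases eq_or_lt_of_le (hq0.trans hqu') with h | hu
      · have hq : q s a = 0 := le_antisymm (h ▸ hqu') hq0
        have := sq_nonneg (b s * u s a)
        simp only [hq]
        nlinarith
      · set x := I s a * ℓ s a * q s a / u s a with hxdef
        have hrw : (I s a * ℓ s a / u s a - b s) ^ 2 * (q s a) ^ 2
            = (x - b s * q s a) ^ 2 := by
          rw [hxdef]; field_simp
        have hx0 : 0 ≤ x := by positivity
        have hx1 : x ≤ I s a := by
          rcases hI s a with h | h
          · simp [hxdef, h]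
          · rw [hxdef, h, one_mul, div_le_one hu]
            nlinarith
        have hy0 : 0 ≤ b s * q s a := mul_nonneg hb0 hq0
        have hy1 : b s * q s a ≤ b s * u s a := mul_le_mul_of_nonneg_left hqu' hb0
        rw [hrw]
        nlinarith [mul_nonneg hx0 hy0, sq_nonneg x, sq_nonneg (b s * q s a)]
    have hnum0 : 0 ≤ (I s a * ℓ s a / u s a - b s) ^ 2 * (q s a) ^ 2 := by positivity
    exact div_le_div₀ (by positivity) hnum hG (hγ s a)
  calc ∑ s, ∑ a, (I s a * ℓ s a / u s a - b s) ^ 2 * (q s a) ^ 2 / γ s a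
      ≤ ∑ s, ∑ a, (I s a + (b s * u s a) ^ 2) / G := by
        exact Finset.sum_le_sum fun s _ => Finset.sum_le_sum fun a _ => key s a
    _ = (∑ s, ∑ a, I s a + ∑ s, ∑ a, (b s * u s a) ^ 2) / G := by
        simp only [add_div, Finset.sum_add_distrib, Finset.sum_div]
    _ ≤ ((L : ℝ) + 16 * (L : ℝ) ^ 2 * (Fintype.card S : ℝ)) / G := by
        gcongr
        calc ∑ s, ∑ a, (b s * u s a) ^ 2
              ≤ ∑ s : S, 16 * (L : ℝ) ^ 2 := by
                apply Finset.sum_le_sum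
                intro s _
                obtain ⟨hb0, hb1⟩ := hb s
                have hbu : b s * (∑ a, u s a) ≤ 4 * (L : ℝ) := by
                  rw [← le_div_iff₀ (husum s)]; exact hb1
                have h1 : ∑ a, (b s * u s a) ^ 2 = (b s) ^ 2 * ∑ a, (u s a) ^ 2 := by
                  rw [Finset.mul_sum]; congr 1; funext a; ring
                have h2 : ∑ a, (u s a) ^ 2 ≤ (∑ a, u s a) ^ 2 :=
                  Finset.sum_sq_le_sq_sum_of_nonneg fun a _ => (hqu s a).1.trans (hqu s a).2
                have h3 : (b s) ^ 2 * ∑ a, (u s a) ^ 2 ≤ (b s) ^ 2 * (∑ a, u s a) ^ 2 := by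
                  apply mul_le_mul_of_nonneg_left h2 (by positivity)
                have h4 : (b s) ^ 2 * (∑ a, u s a) ^ 2 = (b s * ∑ a, u s a) ^ 2 := by ring
                nlinarith [mul_nonneg hb0 (husum s).le]
            _ = 16 * (L : ℝ) ^ 2 * (Fintype.card S : ℝ) := by
                rw [Finset.sum_const, nsmul_eq_mul, Fintype.card, mul_comm]
    _ ≤ 1 / 8 := by
        rw [div_le_div_iff₀ hG (by norm_num)]
        nlinarith
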